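/- arXiv:1812.10342 — 2 statements merged into one kernel-verified Lean document; each statement's English description precedes it below -/
import Mathlib

section
/- Suppose that T : E_1 → E_2 is 2-local in G_Π(E_1,E_2) ∩ Iso(E_1,E_2). Then there exist ε ∈ {1,−1} and α ∈ ℂ with |α| = 1 such that for every f ∈ W_1 there exists a homeomorphism π_f ∈ Π with T(f) = T(0) + α·[f∘π_f]^ε. -/
/-- `[f]^ε`: the function itself if `ε = 1`, its pointwise complex conjugate otherwise. -/
noncomputable def epow {X : Type*} [TopologicalSpace X] (ε : ℤ) (f : C(X, ℂ)) : C(X, ℂ) :=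
  if ε = 1 then f else star f

/-- The set `W` of elements `f` of a subspace `E` of `C(X)` such that the only isometry of `ℂ`
leaving the range of `f` invariant is the identity. -/
def Wset {X : Type*} [TopologicalSpace X] (E : Submodule ℂ C(X, ℂ)) : Set E :=
  {f | ∀ S : ℂ → ℂ, Isometry S →
    S '' Set.range ⇑(f : C(X, ℂ)) = Set.range ⇑(f : C(X, ℂ)) → S = id}

noncomputable def cstar (ε : ℤ) (z : ℂ) : ℂ := if ε = 1 then z else star z

lemma cstar_one (ε : ℤ) : cstar ε 1 = 1 := by unfold cstar; split <;> simp

lemma cstar_zero (ε : ℤ) : cstar ε 0 = 0 := by unfold cstar; split <;> simp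

lemma cstar_one' (z : ℂ) : cstar 1 z = z := if_pos rfl

lemma cstar_neg_one (z : ℂ) : cstar (-1) z = star z := if_neg (by decide)

lemma cstar_sub_norm (ε : ℤ) (z w : ℂ) : ‖cstar ε z - cstar ε w‖ = ‖z - w‖ := by
  unfold cstar; split
  · rfl
  · rw [← star_sub]; exact norm_star _

lemma cstar_cstar (ε : ℤ) (z : ℂ) : cstar ε (cstar ε z) = z := by
  unfold cstar; split <;> simp

lemma epow_apply {X : Type*} [TopologicalSpace X] (ε : ℤ) (f : C(X, ℂ)) (x : X) :
    epow ε f x = cstar ε (f x) := by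
  unfold epow cstar; split <;> simp

lemma key {X1 X2 : Type*} [TopologicalSpace X1] [TopologicalSpace X2]
    (f : C(X1, ℂ))
    (hf : ∀ S : ℂ → ℂ, Isometry S → S '' Set.range ⇑f = Set.range ⇑f → S = id)
    (π1 π2 : X2 ≃ₜ X1) (ε1 ε2 : ℤ) (hε1 : ε1 = 1 ∨ ε1 = -1) (hε2 : ε2 = 1 ∨ ε2 = -1)
    (α1 α2 d : ℂ) (h1 : ‖α1‖ = 1) (h2 : ‖α2‖ = 1)
    (heq : ∀ x : X2, α1 * cstar ε1 (f (π1 x)) = d + α2 * cstar ε2 (f (π2 x))) :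
    ε1 = ε2 ∧ α1 = α2 ∧ d = 0 := by
  have hα2ne : α2 ≠ 0 := by intro h; rw [h] at h2; simp at h2
  have hα1ne : α1 ≠ 0 := by intro h; rw [h] at h1; simp at h1
  have ha2' : (starRingEnd ℂ) α2 ≠ 0 := by
    simpa [Complex.star_def] using star_ne_zero.mpr hα2ne
  have hconj2 : (starRingEnd ℂ) α2 * α2 = 1 := by
    rw [mul_comm, Complex.mul_conj]
    norm_cast
    rw [Complex.normSq_eq_norm_sq, h2]; norm_num
  have hconj1 : (starRingEnd ℂ) α1 * α1 = 1 := by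
    rw [mul_comm, Complex.mul_conj]
    norm_cast
    rw [Complex.normSq_eq_norm_sq, h1]; norm_num
  set S : ℂ → ℂ := fun z => cstar ε2 (star α2 * (α1 * cstar ε1 z - d)) with hSdef
  have hiso : Isometry S := by
    apply Isometry.of_dist_eq
    intro z w
    simp only [hSdef, dist_eq_norm]
    rw [cstar_sub_norm]
    have : star α2 * (α1 * cstar ε1 z - d) - star α2 * (α1 * cstar ε1 w - d)
        = (star α2 * α1) * (cstar ε1 z - cstar ε1 w) := by ring
    rw [this, norm_mul, norm_mul, norm_star, h1, h2, cstar_sub_norm]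
    ring
  have hmap : ∀ x : X2, S (f (π1 x)) = f (π2 x) := by
    intro x
    simp only [hSdef]
    rw [heq x]
    have h5 : star α2 * (d + α2 * cstar ε2 (f (π2 x)) - d)
        = (star α2 * α2) * cstar ε2 (f (π2 x)) := by ring
    rw [h5, Complex.star_def, hconj2, one_mul, cstar_cstar]
  have himg : S '' Set.range ⇑f = Set.range ⇑f := by
    apply Set.eq_of_subset_of_subset
    · rintro _ ⟨_, ⟨x1, rfl⟩, rfl⟩
      have : x1 = π1 (π1.symm x1) := (π1.apply_symm_apply x1).symm
      rw [this, hmap (π1.symm x1)]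
      exact ⟨_, rfl⟩
    · rintro _ ⟨x1, rfl⟩
      refine ⟨f (π1 (π2.symm x1)), ⟨_, rfl⟩, ?_⟩
      rw [hmap (π2.symm x1), π2.apply_symm_apply]
  have hid := hf S hiso himg
  have h0 : S 0 = 0 := by rw [hid]; rfl
  have hone : S 1 = 1 := by rw [hid]; rfl
  have hi : S Complex.I = Complex.I := by rw [hid]; rfl
  rcases hε1 with rfl | rfl <;> rcases hε2 with rfl | rfl <;>
    simp only [hSdef, cstar_one', cstar_neg_one, Complex.star_def, map_mul, map_sub, map_zero,
      map_one, Complex.conj_conj, Complex.conj_I, mul_zero, zero_sub, mul_one] at h0 hone hi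
  · -- ε1 = 1, ε2 = 1
    have hd0 : (starRingEnd ℂ) α2 * d = 0 := by linear_combination -h0
    have hd : d = 0 := (mul_eq_zero.mp hd0).resolve_left ha2'
    subst hd
    have e1 : (starRingEnd ℂ) α2 * α1 = 1 := by linear_combination hone
    exact ⟨rfl, by linear_combination α2 * e1 - α1 * hconj2, rfl⟩
  · -- ε1 = 1, ε2 = -1 : contradiction
    exfalso
    have hd0 : α2 * (starRingEnd ℂ) d = 0 := by linear_combination -h0
    have hcd : (starRingEnd ℂ) d = 0 := (mul_eq_zero.mp hd0).resolve_left hα2ne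
    have e1 : α2 * (starRingEnd ℂ) α1 = 1 := by linear_combination hone + α2 * hcd
    have e2 : (2 : ℂ) * Complex.I = 0 := by
      linear_combination -hi - α2 * hcd - Complex.I * e1
    norm_num [Complex.ext_iff] at e2
  · -- ε1 = -1, ε2 = 1 : contradiction
    exfalso
    have hd0 : (starRingEnd ℂ) α2 * d = 0 := by linear_combination -h0
    have hd : d = 0 := (mul_eq_zero.mp hd0).resolve_left ha2'
    subst hd
    have e1 : (starRingEnd ℂ) α2 * α1 = 1 := by linear_combination hone
    have e2 : (2 : ℂ) * Complex.I = 0 := by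
      linear_combination -hi - Complex.I * e1
    norm_num [Complex.ext_iff] at e2
  · -- ε1 = -1, ε2 = -1
    have hd0 : α2 * (starRingEnd ℂ) d = 0 := by linear_combination -h0
    have hcd : (starRingEnd ℂ) d = 0 := (mul_eq_zero.mp hd0).resolve_left hα2ne
    have hd : d = 0 := by
      have := congrArg (starRingEnd ℂ) hcd
      simpa using this
    have e1 : α2 * (starRingEnd ℂ) α1 = 1 := by linear_combination hone + α2 * hcd
    exact ⟨rfl, by linear_combination α2 * hconj1 - α1 * e1, hd⟩

/-- if `T` is 2-local in `G_Π(E₁,E₂) ∩ Iso(E₁,E₂)`, then there are `ε ∈ {1,-1}` and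
a unimodular `α ∈ ℂ` such that for every `f ∈ W₁` there is `π_f ∈ Π` with
`T(f) = T(0) + α·[f ∘ π_f]^ε`. -/
theorem stmt_1
    {X1 X2 : Type*} [TopologicalSpace X1] [CompactSpace X1] [T2Space X1]
    [TopologicalSpace X2] [CompactSpace X2] [T2Space X2]
    (E1 : Submodule ℂ C(X1, ℂ)) (E2 : Submodule ℂ C(X2, ℂ))
    -- `E_j` contains the constants
    (hconst1 : ∀ c : ℂ, ContinuousMap.const X1 c ∈ E1)
    (hconst2 : ∀ c : ℂ, ContinuousMap.const X2 c ∈ E2)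
    -- `E_j` separates the points
    (hsep1 : ∀ x y : X1, x ≠ y → ∃ f ∈ E1, f x ≠ f y)
    (hsep2 : ∀ x y : X2, x ≠ y → ∃ f ∈ E2, f x ≠ f y)
    -- `E_j` is conjugate closed
    (hstar1 : ∀ f ∈ E1, star f ∈ E1)
    (hstar2 : ∀ f ∈ E2, star f ∈ E2)
    -- the norms on `E_j`
    (N1 : C(X1, ℂ) → ℝ) (N2 : C(X2, ℂ) → ℝ)
    (hN1add : ∀ f ∈ E1, ∀ g ∈ E1, N1 (f + g) ≤ N1 f + N1 g)
    (hN1smul : ∀ (c : ℂ), ∀ f ∈ E1, N1 (c • f) = ‖c‖ * N1 f)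
    (hN1eq0 : ∀ f ∈ E1, (N1 f = 0 ↔ f = 0))
    (hN1const : ∀ c : ℂ, N1 (ContinuousMap.const X1 c) = ‖c‖)
    (hN1star : ∀ f ∈ E1, N1 (star f) = N1 f)
    (hN2add : ∀ f ∈ E2, ∀ g ∈ E2, N2 (f + g) ≤ N2 f + N2 g)
    (hN2smul : ∀ (c : ℂ), ∀ f ∈ E2, N2 (c • f) = ‖c‖ * N2 f)
    (hN2eq0 : ∀ f ∈ E2, (N2 f = 0 ↔ f = 0))
    (hN2const : ∀ c : ℂ, N2 (ContinuousMap.const X2 c) = ‖c‖)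
    (hN2star : ∀ f ∈ E2, N2 (star f) = N2 f)
    -- a nonempty set of homeomorphisms from `X₂` onto `X₁`
    (PP : Set (X2 ≃ₜ X1)) (hPP : PP.Nonempty)
    (T : E1 → E2)
    -- `T` is 2-local in `G_Π(E₁,E₂) ∩ Iso(E₁,E₂)`
    (h2loc : ∀ f g : E1, ∃ S : E1 → E2,
      ((∃ lam : E2, ∃ α : ℂ, ‖α‖ = 1 ∧ ∃ π ∈ PP, ∃ ε ∈ ({1, -1} : Set ℤ),
          ∀ h : E1, (S h : C(X2, ℂ)) =
            (lam : C(X2, ℂ)) + α • epow ε ((h : C(X1, ℂ)).comp (π : C(X2, X1)))) ∧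
        (Function.Surjective S ∧
          ∀ u v : E1, N2 ((S u : C(X2, ℂ)) - (S v : C(X2, ℂ)))
            = N1 ((u : C(X1, ℂ)) - (v : C(X1, ℂ))))) ∧
      T f = S f ∧ T g = S g) :
    ∃ ε ∈ ({1, -1} : Set ℤ), ∃ α : ℂ, ‖α‖ = 1 ∧
      ∀ f ∈ Wset E1, ∃ π ∈ PP,
        (T f : C(X2, ℂ)) =
          (T 0 : C(X2, ℂ)) + α • epow ε ((f : C(X1, ℂ)).comp (π : C(X2, X1))) := by
  rcases (Wset E1).eq_empty_or_nonempty with hW | ⟨f0, hf0⟩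
  · exact ⟨1, by simp, 1, by simp, fun f hf => by
      rw [hW] at hf; exact absurd hf (Set.notMem_empty f)⟩
  have hX1 : Nonempty X1 := by
    by_contra hne
    have hie : IsEmpty X1 := not_nonempty_iff.mp hne
    have hr : Set.range ⇑((f0 : E1) : C(X1, ℂ)) = (∅ : Set ℂ) := Set.range_eq_empty _
    have hisom : Isometry (fun z : ℂ => z + 1) :=
      Isometry.of_dist_eq fun a b => dist_add_right a b 1
    have hid := hf0 (fun z : ℂ => z + 1) hisom (by rw [hr, Set.image_empty])
    have := congrFun hid 0
    simp at this
  obtain ⟨πa, hπa⟩ := hPP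
  have hX2 : Nonempty X2 := hX1.elim fun x => ⟨πa.symm x⟩
  obtain ⟨x2⟩ := hX2
  -- Step 1: representation of T f - T 0 for every f
  have rep : ∀ f : E1, ∃ ε : ℤ, (ε = 1 ∨ ε = -1) ∧ ∃ α : ℂ, ‖α‖ = 1 ∧ ∃ π, π ∈ PP ∧
      ∀ x : X2, (T f : C(X2, ℂ)) x
        = (T 0 : C(X2, ℂ)) x + α * cstar ε ((f : C(X1, ℂ)) (π x)) := by
    intro f
    obtain ⟨S, ⟨⟨lam, α, hα, π, hπ, ε, hε, hform⟩, -⟩, hTf, hT0⟩ := h2loc f 0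
    refine ⟨ε, by simpa using hε, α, hα, π, hπ, fun x => ?_⟩
    have h1 := ContinuousMap.congr_fun (hform f) x
    have h2 := ContinuousMap.congr_fun (hform 0) x
    rw [hTf, hT0]
    simp only [ContinuousMap.add_apply, ContinuousMap.smul_apply, smul_eq_mul, epow_apply,
      ContinuousMap.comp_apply, ContinuousMap.coe_coe, ContinuousMap.coe_apply] at h1 h2
    simp only [ZeroMemClass.coe_zero, ContinuousMap.zero_apply, cstar_zero, mul_zero,
      add_zero] at h2
    rw [h1, h2]
  -- Step 2: the value of T at constants, computed from any representation of f ∈ Wset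
  have step2 : ∀ (f : E1), f ∈ Wset E1 → ∀ (ε : ℤ) (α : ℂ) (π : X2 ≃ₜ X1),
      (ε = 1 ∨ ε = -1) → ‖α‖ = 1 →
      (∀ x : X2, (T f : C(X2, ℂ)) x
        = (T 0 : C(X2, ℂ)) x + α * cstar ε ((f : C(X1, ℂ)) (π x))) →
      ∀ c : ℂ, (T ⟨ContinuousMap.const X1 c, hconst1 c⟩ : C(X2, ℂ)) x2
        = (T 0 : C(X2, ℂ)) x2 + α * cstar ε c := by
    intro f hfW ε α π hε hα hfx c
    set cf : E1 := ⟨ContinuousMap.const X1 c, hconst1 c⟩ with hcf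
    obtain ⟨ε', hε', α', hα', π', hπ', hc'⟩ := rep cf
    have hc'' : ∀ x : X2, (T cf : C(X2, ℂ)) x = (T 0 : C(X2, ℂ)) x + α' * cstar ε' c := by
      intro x
      have := hc' x
      simpa [hcf] using this
    obtain ⟨S, ⟨⟨lam, β, hβ, π2, hπ2, ε2m, hε2m, hform⟩, -⟩, hTf, hTc⟩ := h2loc f cf
    have hε2 : ε2m = 1 ∨ ε2m = -1 := by simpa using hε2m
    have hB : ∀ y, (T f : C(X2, ℂ)) y
        = (lam : C(X2, ℂ)) y + β * cstar ε2m ((f : C(X1, ℂ)) (π2 y)) := by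
      intro y
      have := ContinuousMap.congr_fun (hform f) y
      rw [hTf]
      simpa [epow_apply] using this
    have hC : ∀ y, (T cf : C(X2, ℂ)) y = (lam : C(X2, ℂ)) y + β * cstar ε2m c := by
      intro y
      have := ContinuousMap.congr_fun (hform cf) y
      rw [hTc]
      simpa [epow_apply, hcf] using this
    have hkey : ∀ y, α * cstar ε ((f : C(X1, ℂ)) (π y))
        = (α' * cstar ε' c - β * cstar ε2m c) + β * cstar ε2m ((f : C(X1, ℂ)) (π2 y)) := by
      intro y
      have hA := hfx y
      have hB' := hB y
      have hC' := hC y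
      have hD := hc'' y
      linear_combination -hA + hB' - hC' + hD
    obtain ⟨hεeq, hαeq, hdeq⟩ := key ((f : E1) : C(X1, ℂ)) hfW π π2 ε ε2m hε hε2 α β
      (α' * cstar ε' c - β * cstar ε2m c) hα hβ hkey
    rw [hc'' x2]
    have hfin : α' * cstar ε' c = α * cstar ε c := by
      rw [hαeq, hεeq]
      linear_combination hdeq
    rw [hfin]
  -- assemble
  obtain ⟨ε0, hε0, α0, hα0, π0', hπ0', hrep0⟩ := rep f0
  have hα0ne : α0 ≠ 0 := by intro h; rw [h] at hα0; simp at hα0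
  refine ⟨ε0, by rcases hε0 with h | h <;> simp [h], α0, hα0, ?_⟩
  intro f hfW
  obtain ⟨εf, hεf, αf, hαf, πf, hπf, hrepf⟩ := rep f
  have hcomp : ∀ c : ℂ, αf * cstar εf c = α0 * cstar ε0 c := by
    intro c
    have e1 := step2 f hfW εf αf πf hεf hαf hrepf c
    have e2 := step2 f0 hf0 ε0 α0 π0' hε0 hα0 hrep0 c
    linear_combination e2 - e1
  have hαeq : αf = α0 := by
    have := hcomp 1
    rwa [cstar_one, cstar_one, mul_one, mul_one] at this
  have hεeq : εf = ε0 := by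
    rcases hεf with rfl | rfl <;> rcases hε0 with rfl | rfl
    · rfl
    · exfalso
      have hthis := hcomp Complex.I
      rw [cstar_one', cstar_neg_one, Complex.star_def, Complex.conj_I, hαeq] at hthis
      have h2I : (2 : ℂ) * Complex.I = 0 := by
        rcases mul_eq_zero.mp (show α0 * ((2 : ℂ) * Complex.I) = 0 by
          linear_combination hthis) with h | h
        · exact absurd h hα0ne
        · exact h
      norm_num [Complex.ext_iff] at h2I
    · exfalso
      have hthis := hcomp Complex.I
      rw [cstar_one', cstar_neg_one, Complex.star_def, Complex.conj_I, hαeq] at hthis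
      have h2I : (2 : ℂ) * Complex.I = 0 := by
        rcases mul_eq_zero.mp (show α0 * ((2 : ℂ) * Complex.I) = 0 by
          linear_combination -hthis) with h | h
        · exact absurd h hα0ne
        · exact h
      norm_num [Complex.ext_iff] at h2I
    · rfl
  refine ⟨πf, hπf, ?_⟩
  ext x
  simp only [ContinuousMap.add_apply, ContinuousMap.smul_apply, smul_eq_mul, epow_apply,
    ContinuousMap.comp_apply, ContinuousMap.coe_coe, ContinuousMap.coe_apply]
  rw [← hεeq, ← hαeq]
  exact hrepf x
end

section
/- Suppose that T : E_1 → E_2 is 2-local in G_Π(E_1,E_2) ∩ Iso(E_1,E_2) and T(0) = 0. Then T maps every constant function in E_1 to a constant function in E_2, and there exists α ∈ ℂ with |α| = 1 such that either T(c) = α·c for every constant c ∈ ℂ, or T(c) = α·conj(c) for every constant c ∈ ℂ (where a complex number c is identified with the corresponding constant function). -/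
private lemma epow_one {X : Type*} [TopologicalSpace X] (f : C(X, ℂ)) : epow 1 f = f :=
  if_pos rfl

private lemma epow_neg_one {X : Type*} [TopologicalSpace X] (f : C(X, ℂ)) :
    epow (-1) f = star f := if_neg (by decide)

private lemma complex_rigid (φ : ℂ → ℂ) (h0 : φ 0 = 0)
    (hd : ∀ c c' : ℂ, ‖φ c - φ c'‖ = ‖c - c'‖) :
    ∃ α : ℂ, ‖α‖ = 1 ∧ ((∀ c, φ c = α * c) ∨ (∀ c, φ c = α * (starRingEnd ℂ) c)) := by
  have hnsq : ∀ c c' : ℂ, Complex.normSq (φ c - φ c') = Complex.normSq (c - c') := by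
    intro c c'
    rw [← Complex.sq_norm, ← Complex.sq_norm (c - c'), hd]
  have hn : ∀ c : ℂ, Complex.normSq (φ c) = Complex.normSq c := by
    intro c; simpa [h0] using hnsq c 0
  have hinner : ∀ c c' : ℂ,
      (φ c).re * (φ c').re + (φ c).im * (φ c').im = c.re * c'.re + c.im * c'.im := by
    intro c c'
    have h1 := hnsq c c'
    have h2 := hn c
    have h3 := hn c'
    simp only [Complex.normSq_apply, Complex.sub_re, Complex.sub_im] at h1 h2 h3
    nlinarith [h1, h2, h3]
  have e11 : (φ 1).re * (φ 1).re + (φ 1).im * (φ 1).im = 1 := by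
    simpa using hinner 1 1
  have eII : (φ Complex.I).re * (φ Complex.I).re + (φ Complex.I).im * (φ Complex.I).im = 1 := by
    simpa using hinner Complex.I Complex.I
  have e1I : (φ 1).re * (φ Complex.I).re + (φ 1).im * (φ Complex.I).im = 0 := by
    simpa using hinner 1 Complex.I
  have hβnorm : ‖φ 1‖ = 1 := by
    have h2 : ‖φ 1‖ ^ 2 = 1 := by
      rw [Complex.sq_norm, Complex.normSq_apply]; exact e11
    nlinarith [norm_nonneg (φ 1)]
  have hs : ((φ Complex.I).re * (φ 1).im - (φ Complex.I).im * (φ 1).re)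
      * ((φ Complex.I).re * (φ 1).im - (φ Complex.I).im * (φ 1).re) = 1 := by
    nlinarith [e11, eII, e1I]
  rcases mul_self_eq_one_iff.mp hs with h | h
  · -- s = 1 : conjugation case
    have hgr : (φ Complex.I).re = (φ 1).im := by
      nlinarith [sq_nonneg ((φ Complex.I).re - (φ 1).im), sq_nonneg ((φ Complex.I).im + (φ 1).re)]
    have hgi : (φ Complex.I).im = -(φ 1).re := by
      nlinarith [sq_nonneg ((φ Complex.I).re - (φ 1).im), sq_nonneg ((φ Complex.I).im + (φ 1).re)]
    refine ⟨φ 1, hβnorm, Or.inr fun c => ?_⟩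
    have e1 : (φ c).re * (φ 1).re + (φ c).im * (φ 1).im = c.re := by simpa using hinner c 1
    have e2 : (φ c).re * (φ Complex.I).re + (φ c).im * (φ Complex.I).im = c.im := by
      simpa using hinner c Complex.I
    rw [hgr, hgi] at e2
    apply Complex.ext
    · simp only [Complex.mul_re, Complex.conj_re, Complex.conj_im]
      linear_combination (φ 1).re * e1 + (φ 1).im * e2 - (φ c).re * e11
    · simp only [Complex.mul_im, Complex.conj_re, Complex.conj_im]
      linear_combination (φ 1).im * e1 - (φ 1).re * e2 - (φ c).im * e11
  · -- s = -1 : linear case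
    have hgr : (φ Complex.I).re = -(φ 1).im := by
      nlinarith [sq_nonneg ((φ Complex.I).re + (φ 1).im), sq_nonneg ((φ Complex.I).im - (φ 1).re)]
    have hgi : (φ Complex.I).im = (φ 1).re := by
      nlinarith [sq_nonneg ((φ Complex.I).re + (φ 1).im), sq_nonneg ((φ Complex.I).im - (φ 1).re)]
    refine ⟨φ 1, hβnorm, Or.inl fun c => ?_⟩
    have e1 : (φ c).re * (φ 1).re + (φ c).im * (φ 1).im = c.re := by simpa using hinner c 1
    have e2 : (φ c).re * (φ Complex.I).re + (φ c).im * (φ Complex.I).im = c.im := by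
      simpa using hinner c Complex.I
    rw [hgr, hgi] at e2
    apply Complex.ext
    · simp only [Complex.mul_re]
      linear_combination (φ 1).re * e1 - (φ 1).im * e2 - (φ c).re * e11
    · simp only [Complex.mul_im]
      linear_combination (φ 1).im * e1 + (φ 1).re * e2 - (φ c).im * e11

/-- if `T` is 2-local in `G_Π(E₁,E₂) ∩ Iso(E₁,E₂)` and `T(0) = 0`, then `T` maps
constants to constants and there is a unimodular `α ∈ ℂ` with `T(c) = α·c` for all constants `c`
or `T(c) = α·conj(c)` for all constants `c`. -/
theorem stmt_2
    {X1 X2 : Type*} [TopologicalSpace X1] [CompactSpace X1] [T2Space X1]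
    [TopologicalSpace X2] [CompactSpace X2] [T2Space X2]
    (E1 : Submodule ℂ C(X1, ℂ)) (E2 : Submodule ℂ C(X2, ℂ))
    -- `E_j` contains the constants
    (hconst1 : ∀ c : ℂ, ContinuousMap.const X1 c ∈ E1)
    (hconst2 : ∀ c : ℂ, ContinuousMap.const X2 c ∈ E2)
    -- `E_j` separates the points
    (hsep1 : ∀ x y : X1, x ≠ y → ∃ f ∈ E1, f x ≠ f y)
    (hsep2 : ∀ x y : X2, x ≠ y → ∃ f ∈ E2, f x ≠ f y)
    -- `E_j` is conjugate closed
    (hstar1 : ∀ f ∈ E1, star f ∈ E1)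
    (hstar2 : ∀ f ∈ E2, star f ∈ E2)
    -- the norms on `E_j`
    (N1 : C(X1, ℂ) → ℝ) (N2 : C(X2, ℂ) → ℝ)
    (hN1add : ∀ f ∈ E1, ∀ g ∈ E1, N1 (f + g) ≤ N1 f + N1 g)
    (hN1smul : ∀ (c : ℂ), ∀ f ∈ E1, N1 (c • f) = ‖c‖ * N1 f)
    (hN1eq0 : ∀ f ∈ E1, (N1 f = 0 ↔ f = 0))
    (hN1const : ∀ c : ℂ, N1 (ContinuousMap.const X1 c) = ‖c‖)
    (hN1star : ∀ f ∈ E1, N1 (star f) = N1 f)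
    (hN2add : ∀ f ∈ E2, ∀ g ∈ E2, N2 (f + g) ≤ N2 f + N2 g)
    (hN2smul : ∀ (c : ℂ), ∀ f ∈ E2, N2 (c • f) = ‖c‖ * N2 f)
    (hN2eq0 : ∀ f ∈ E2, (N2 f = 0 ↔ f = 0))
    (hN2const : ∀ c : ℂ, N2 (ContinuousMap.const X2 c) = ‖c‖)
    (hN2star : ∀ f ∈ E2, N2 (star f) = N2 f)
    -- a nonempty set of homeomorphisms from `X₂` onto `X₁`
    (PP : Set (X2 ≃ₜ X1)) (hPP : PP.Nonempty)
    (T : E1 → E2) (hT0 : T 0 = 0)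
    -- `T` is 2-local in `G_Π(E₁,E₂) ∩ Iso(E₁,E₂)`
    (h2loc : ∀ f g : E1, ∃ S : E1 → E2,
      ((∃ lam : E2, ∃ α : ℂ, ‖α‖ = 1 ∧ ∃ π ∈ PP, ∃ ε ∈ ({1, -1} : Set ℤ),
          ∀ h : E1, (S h : C(X2, ℂ)) =
            (lam : C(X2, ℂ)) + α • epow ε ((h : C(X1, ℂ)).comp (π : C(X2, X1)))) ∧
        (Function.Surjective S ∧
          ∀ u v : E1, N2 ((S u : C(X2, ℂ)) - (S v : C(X2, ℂ)))
            = N1 ((u : C(X1, ℂ)) - (v : C(X1, ℂ))))) ∧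
      T f = S f ∧ T g = S g) :
    (∀ c : ℂ, ∃ d : ℂ,
      (T ⟨ContinuousMap.const X1 c, hconst1 c⟩ : C(X2, ℂ)) = ContinuousMap.const X2 d) ∧
    ∃ α : ℂ, ‖α‖ = 1 ∧
      ((∀ c : ℂ, (T ⟨ContinuousMap.const X1 c, hconst1 c⟩ : C(X2, ℂ))
          = ContinuousMap.const X2 (α * c)) ∨
       (∀ c : ℂ, (T ⟨ContinuousMap.const X1 c, hconst1 c⟩ : C(X2, ℂ))
          = ContinuousMap.const X2 (α * (starRingEnd ℂ) c))) := by
  rcases isEmpty_or_nonempty X2 with hE | hNE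
  · have hsub : ∀ f g : C(X2, ℂ), f = g := fun f g =>
      ContinuousMap.ext fun x => (hE.false x).elim
    exact ⟨fun c => ⟨0, hsub _ _⟩, 1, by simp, Or.inl fun c => hsub _ _⟩
  obtain ⟨x0⟩ := hNE
  -- From the pair (const c, const c'), the difference of images is α·(c - c') or α·(c̄ - c̄').
  have key : ∀ c c' : ℂ, ∃ α : ℂ, ‖α‖ = 1 ∧
      ((∀ x : X2,
          (T ⟨ContinuousMap.const X1 c, hconst1 c⟩ : C(X2, ℂ)) x
            - (T ⟨ContinuousMap.const X1 c', hconst1 c'⟩ : C(X2, ℂ)) x = α * (c - c')) ∨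
       (∀ x : X2,
          (T ⟨ContinuousMap.const X1 c, hconst1 c⟩ : C(X2, ℂ)) x
            - (T ⟨ContinuousMap.const X1 c', hconst1 c'⟩ : C(X2, ℂ)) x
            = α * ((starRingEnd ℂ) c - (starRingEnd ℂ) c'))) := by
    intro c c'
    obtain ⟨S, ⟨⟨lam, α, hα, π, hπ, ε, hε, hSform⟩, -⟩, hTf, hTg⟩ :=
      h2loc ⟨ContinuousMap.const X1 c, hconst1 c⟩ ⟨ContinuousMap.const X1 c', hconst1 c'⟩
    refine ⟨α, hα, ?_⟩
    have hf : (T ⟨ContinuousMap.const X1 c, hconst1 c⟩ : C(X2, ℂ))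
        = (lam : C(X2, ℂ)) + α • epow ε ((ContinuousMap.const X1 c).comp (π : C(X2, X1))) := by
      rw [hTf]; exact hSform _
    have hg : (T ⟨ContinuousMap.const X1 c', hconst1 c'⟩ : C(X2, ℂ))
        = (lam : C(X2, ℂ)) + α • epow ε ((ContinuousMap.const X1 c').comp (π : C(X2, X1))) := by
      rw [hTg]; exact hSform _
    simp only [Set.mem_insert_iff, Set.mem_singleton_iff] at hε
    rcases hε with rfl | rfl
    · left; intro x
      rw [hf, hg]
      simp only [epow_one, ContinuousMap.add_apply, ContinuousMap.smul_apply,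
        ContinuousMap.comp_apply, ContinuousMap.const_apply, smul_eq_mul]
      ring
    · right; intro x
      rw [hf, hg]
      simp only [epow_neg_one, ContinuousMap.add_apply,
        ContinuousMap.smul_apply, ContinuousMap.star_apply, ContinuousMap.comp_apply,
        ContinuousMap.const_apply, smul_eq_mul, Complex.star_def]
      ring
  -- From the pair (const c, 0) and T 0 = 0: the image of a constant is a constant.
  have hconstfun : ∀ c : ℂ, (T ⟨ContinuousMap.const X1 c, hconst1 c⟩ : C(X2, ℂ))
      = ContinuousMap.const X2 ((T ⟨ContinuousMap.const X1 c, hconst1 c⟩ : C(X2, ℂ)) x0) := by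
    intro c
    obtain ⟨S, ⟨⟨lam, α, hα, π, hπ, ε, hε, hSform⟩, -⟩, hTf, hTg⟩ :=
      h2loc ⟨ContinuousMap.const X1 c, hconst1 c⟩ 0
    have he0 : epow ε (((0 : E1) : C(X1, ℂ)).comp (π : C(X2, X1))) = 0 := by
      unfold epow; split <;> simp
    have hlam : (lam : C(X2, ℂ)) = 0 := by
      have h00 := hSform 0
      rw [← hTg, hT0, he0] at h00
      simpa using h00.symm
    have hf : (T ⟨ContinuousMap.const X1 c, hconst1 c⟩ : C(X2, ℂ))
        = (lam : C(X2, ℂ)) + α • epow ε ((ContinuousMap.const X1 c).comp (π : C(X2, X1))) := by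
      rw [hTf]; exact hSform _
    rw [hlam, zero_add] at hf
    ext x
    rw [ContinuousMap.const_apply, hf]
    by_cases h1 : ε = 1 <;>
      simp [epow, h1]
  -- The induced map on constants is an isometry of ℂ fixing 0.
  have hφ0 : (T ⟨ContinuousMap.const X1 (0 : ℂ), hconst1 0⟩ : C(X2, ℂ)) x0 = 0 := by
    have hz : (⟨ContinuousMap.const X1 (0 : ℂ), hconst1 0⟩ : E1) = 0 :=
      Subtype.ext (by ext x; simp)
    rw [hz, hT0]
    simp
  have hφd : ∀ c c' : ℂ,
      ‖(T ⟨ContinuousMap.const X1 c, hconst1 c⟩ : C(X2, ℂ)) x0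
        - (T ⟨ContinuousMap.const X1 c', hconst1 c'⟩ : C(X2, ℂ)) x0‖
        = ‖c - c'‖ := by
    intro c c'
    obtain ⟨α, hα, hcase | hcase⟩ := key c c'
    · rw [hcase x0, norm_mul]
      rw [hα, one_mul]
    · rw [hcase x0, norm_mul, ← map_sub, Complex.norm_conj]
      rw [hα, one_mul]
  obtain ⟨α, hα, hA | hA⟩ := complex_rigid
    (fun c => (T ⟨ContinuousMap.const X1 c, hconst1 c⟩ : C(X2, ℂ)) x0) hφ0 hφd
  · refine ⟨fun c => ⟨_, hconstfun c⟩, α, hα, Or.inl fun c => ?_⟩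
    rw [hconstfun c]
    exact congrArg (ContinuousMap.const X2) (hA c)
  · refine ⟨fun c => ⟨_, hconstfun c⟩, α, hα, Or.inr fun c => ?_⟩
    rw [hconstfun c]
    exact congrArg (ContinuousMap.const X2) (hA c)
end
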